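/- Let T² ⊂ SO(5) be the set of block-diagonal matrices diag(R(θ₁), R(θ₂), 1) for θ₁, θ₂ ∈ ℝ. Then (i) the subspace of X ∈ Sym₀²(ℂ⁵) with AXAᵀ = X for all A ∈ T² equals { diag(c₁,c₁,c₂,c₂,c₃) : c₁,c₂,c₃ ∈ ℂ, 2c₁+2c₂+c₃ = 0 }, which is 2-dimensional; and (ii) letting M ∈ SO(5) be the matrix with rows (0,0,1,0,0), (0,0,0,−1,0), (1,0,0,0,0), (0,1,0,0,0), (0,0,0,0,−1), the subspace of X ∈ Sym₀²(ℂ⁵) with AXAᵀ = X for all A ∈ T² and MXMᵀ = X equals the one-dimensional span ℂ·diag(−1,−1,−1,−1,4). -/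
import Mathlib


/-!
STATEMENT 7: T²-fixed vectors in Sym₀²(ℂ⁵) (for the maximal torus T² ⊂ SO(5) of
block rotations diag(R(θ₁),R(θ₂),1)) are { diag(c₁,c₁,c₂,c₂,c₃) : 2c₁+2c₂+c₃=0 }
(2-dimensional); adding the ℤ₄-generator M cuts it down to ℂ·diag(−1,−1,−1,−1,4).
-/

open Matrix

noncomputable section

/-- The torus element diag(R(θ₁), R(θ₂), 1) ∈ SO(5), as a complex matrix. -/
def rotT (θ₁ θ₂ : ℝ) : Matrix (Fin 5) (Fin 5) ℂ :=
  !![(Real.cos θ₁ : ℂ), (-Real.sin θ₁ : ℂ), 0, 0, 0;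
     (Real.sin θ₁ : ℂ), (Real.cos θ₁ : ℂ), 0, 0, 0;
     0, 0, (Real.cos θ₂ : ℂ), (-Real.sin θ₂ : ℂ), 0;
     0, 0, (Real.sin θ₂ : ℂ), (Real.cos θ₂ : ℂ), 0;
     0, 0, 0, 0, 1]

/-- The element M ∈ SO(5) representing the ℤ₄ deck transformation. -/
def M7 : Matrix (Fin 5) (Fin 5) ℂ :=
  !![0, 0, 1, 0, 0;
     0, 0, 0, -1, 0;
     1, 0, 0, 0, 0;
     0, 1, 0, 0, 0;
     0, 0, 0, 0, -1]

/-- The set { diag(c₁,c₁,c₂,c₂,c₃) : 2c₁+2c₂+c₃ = 0 }. -/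
def diagSet : Set (Matrix (Fin 5) (Fin 5) ℂ) :=
  {Y | ∃ c₁ c₂ c₃ : ℂ, 2 * c₁ + 2 * c₂ + c₃ = 0 ∧ Y = Matrix.diagonal ![c₁, c₁, c₂, c₂, c₃]}

lemma rot_mul_transpose (θ₁ θ₂ : ℝ) : rotT θ₁ θ₂ * (rotT θ₁ θ₂)ᵀ = 1 := by
  have h1 := Complex.sin_sq_add_cos_sq (θ₁ : ℂ)
  have h2 := Complex.sin_sq_add_cos_sq (θ₂ : ℂ)
  ext i j
  fin_cases i <;> fin_cases j <;>
    simp [rotT, Matrix.mul_apply, Fin.sum_univ_five, Matrix.one_apply,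
      Matrix.transpose_apply, Matrix.vecHead, Matrix.vecTail] <;>
    first | linear_combination h1 | linear_combination h2 | ring

lemma diag_comm (c₁ c₂ c₃ : ℂ) (θ₁ θ₂ : ℝ) :
    Matrix.diagonal ![c₁, c₁, c₂, c₂, c₃] * rotT θ₁ θ₂ =
      rotT θ₁ θ₂ * Matrix.diagonal ![c₁, c₁, c₂, c₂, c₃] := by
  ext i j
  fin_cases i <;> fin_cases j <;>
    simp [rotT, Matrix.mul_apply, Fin.sum_univ_five, Matrix.diagonal_apply,
      Matrix.vecHead, Matrix.vecTail] <;> ring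

lemma diag_inv (c₁ c₂ c₃ : ℂ) (θ₁ θ₂ : ℝ) :
    rotT θ₁ θ₂ * Matrix.diagonal ![c₁, c₁, c₂, c₂, c₃] * (rotT θ₁ θ₂)ᵀ =
      Matrix.diagonal ![c₁, c₁, c₂, c₂, c₃] := by
  rw [← diag_comm, Matrix.mul_assoc, rot_mul_transpose, Matrix.mul_one]
lemma fixed_diag (X : Matrix (Fin 5) (Fin 5) ℂ) (hs : Xᵀ = X)
    (h : ∀ θ₁ θ₂ : ℝ, rotT θ₁ θ₂ * X * (rotT θ₁ θ₂)ᵀ = X) :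
    X = Matrix.diagonal ![X 0 0, X 0 0, X 2 2, X 2 2, X 4 4] := by
  have hsym : ∀ i j : Fin 5, X j i = X i j := fun i j => congrFun (congrFun hs i) j
  have key : ∀ (θ₁ θ₂ : ℝ) (i j : Fin 5),
      (rotT θ₁ θ₂ * X * (rotT θ₁ θ₂)ᵀ) i j = X i j :=
    fun θ₁ θ₂ i j => congrFun (congrFun (h θ₁ θ₂) i) j
  have e02 := key Real.pi 0 0 2
  simp [rotT, Matrix.mul_apply, Fin.sum_univ_five, Matrix.transpose_apply, Matrix.vecHead, Matrix.vecTail, -Matrix.cons_mul, -Matrix.cons_vecMul, -Matrix.vecMul_cons] at e02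
  have x02 : X 0 2 = 0 := by linear_combination -e02/2
  have e03 := key Real.pi 0 0 3
  simp [rotT, Matrix.mul_apply, Fin.sum_univ_five, Matrix.transpose_apply, Matrix.vecHead, Matrix.vecTail, -Matrix.cons_mul, -Matrix.cons_vecMul, -Matrix.vecMul_cons] at e03
  have x03 : X 0 3 = 0 := by linear_combination -e03/2
  have e04 := key Real.pi 0 0 4
  simp [rotT, Matrix.mul_apply, Fin.sum_univ_five, Matrix.transpose_apply, Matrix.vecHead, Matrix.vecTail, -Matrix.cons_mul, -Matrix.cons_vecMul, -Matrix.vecMul_cons] at e04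
  have x04 : X 0 4 = 0 := by linear_combination -e04/2
  have e12 := key Real.pi 0 1 2
  simp [rotT, Matrix.mul_apply, Fin.sum_univ_five, Matrix.transpose_apply, Matrix.vecHead, Matrix.vecTail, -Matrix.cons_mul, -Matrix.cons_vecMul, -Matrix.vecMul_cons] at e12
  have x12 : X 1 2 = 0 := by linear_combination -e12/2
  have e13 := key Real.pi 0 1 3
  simp [rotT, Matrix.mul_apply, Fin.sum_univ_five, Matrix.transpose_apply, Matrix.vecHead, Matrix.vecTail, -Matrix.cons_mul, -Matrix.cons_vecMul, -Matrix.vecMul_cons] at e13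
  have x13 : X 1 3 = 0 := by linear_combination -e13/2
  have e14 := key Real.pi 0 1 4
  simp [rotT, Matrix.mul_apply, Fin.sum_univ_five, Matrix.transpose_apply, Matrix.vecHead, Matrix.vecTail, -Matrix.cons_mul, -Matrix.cons_vecMul, -Matrix.vecMul_cons] at e14
  have x14 : X 1 4 = 0 := by linear_combination -e14/2
  have e24 := key 0 Real.pi 2 4
  simp [rotT, Matrix.mul_apply, Fin.sum_univ_five, Matrix.transpose_apply, Matrix.vecHead, Matrix.vecTail, -Matrix.cons_mul, -Matrix.cons_vecMul, -Matrix.vecMul_cons] at e24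
  have x24 : X 2 4 = 0 := by linear_combination -e24/2
  have e34 := key 0 Real.pi 3 4
  simp [rotT, Matrix.mul_apply, Fin.sum_univ_five, Matrix.transpose_apply, Matrix.vecHead, Matrix.vecTail, -Matrix.cons_mul, -Matrix.cons_vecMul, -Matrix.vecMul_cons] at e34
  have x34 : X 3 4 = 0 := by linear_combination -e34/2
  have e00 := key (Real.pi/2) 0 0 0
  simp [rotT, Matrix.mul_apply, Fin.sum_univ_five, Matrix.transpose_apply, Matrix.vecHead, Matrix.vecTail, -Matrix.cons_mul, -Matrix.cons_vecMul, -Matrix.vecMul_cons] at e00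
  have x11 : X 1 1 = X 0 0 := by linear_combination e00
  have e01 := key (Real.pi/2) 0 0 1
  simp [rotT, Matrix.mul_apply, Fin.sum_univ_five, Matrix.transpose_apply, Matrix.vecHead, Matrix.vecTail, -Matrix.cons_mul, -Matrix.cons_vecMul, -Matrix.vecMul_cons] at e01
  have x01 : X 0 1 = 0 := by linear_combination (-e01 - hsym 0 1)/2
  have e22 := key 0 (Real.pi/2) 2 2
  simp [rotT, Matrix.mul_apply, Fin.sum_univ_five, Matrix.transpose_apply, Matrix.vecHead, Matrix.vecTail, -Matrix.cons_mul, -Matrix.cons_vecMul, -Matrix.vecMul_cons] at e22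
  have x33 : X 3 3 = X 2 2 := by linear_combination e22
  have e23 := key 0 (Real.pi/2) 2 3
  simp [rotT, Matrix.mul_apply, Fin.sum_univ_five, Matrix.transpose_apply, Matrix.vecHead, Matrix.vecTail, -Matrix.cons_mul, -Matrix.cons_vecMul, -Matrix.vecMul_cons] at e23
  have x23 : X 2 3 = 0 := by linear_combination (-e23 - hsym 2 3)/2
  have y10 : X 1 0 = 0 := (hsym 0 1).trans x01
  have y20 : X 2 0 = 0 := (hsym 0 2).trans x02
  have y30 : X 3 0 = 0 := (hsym 0 3).trans x03
  have y40 : X 4 0 = 0 := (hsym 0 4).trans x04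
  have y21 : X 2 1 = 0 := (hsym 1 2).trans x12
  have y31 : X 3 1 = 0 := (hsym 1 3).trans x13
  have y41 : X 4 1 = 0 := (hsym 1 4).trans x14
  have y32 : X 3 2 = 0 := (hsym 2 3).trans x23
  have y42 : X 4 2 = 0 := (hsym 2 4).trans x24
  have y43 : X 4 3 = 0 := (hsym 3 4).trans x34
  ext i j
  fin_cases i <;> fin_cases j <;>
    simp [Matrix.diagonal_apply, Matrix.vecHead, Matrix.vecTail, x01, x02, x03, x04, x12, x13, x14, x23, x24, x34, y10, y20, y30, y40, y21, y31, y41, y32, y42, y43, x11, x33]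

lemma smul_diag_eq (c : ℂ) :
    c • Matrix.diagonal ![(-1 : ℂ), -1, -1, -1, 4] =
      Matrix.diagonal ![-c, -c, -c, -c, 4 * c] := by
  ext i j
  fin_cases i <;> fin_cases j <;>
    simp [Matrix.diagonal_apply, Matrix.vecHead, Matrix.vecTail] <;> ring

lemma M7_diag (c₁ c₂ c₃ : ℂ) :
    M7 * Matrix.diagonal ![c₁, c₁, c₂, c₂, c₃] * M7ᵀ =
      Matrix.diagonal ![c₂, c₂, c₁, c₁, c₃] := by
  ext i j
  fin_cases i <;> fin_cases j <;>
    simp [M7, Matrix.mul_apply, Fin.sum_univ_five, Matrix.transpose_apply,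
      Matrix.diagonal_apply, Matrix.vecHead, Matrix.vecTail,
      -Matrix.cons_mul, -Matrix.cons_vecMul, -Matrix.vecMul_cons]

theorem statement7 :
    ({X : Matrix (Fin 5) (Fin 5) ℂ | Xᵀ = X ∧ X.trace = 0 ∧
        ∀ θ₁ θ₂ : ℝ, rotT θ₁ θ₂ * X * (rotT θ₁ θ₂)ᵀ = X} = diagSet) ∧
    Module.finrank ℂ ↥(Submodule.span ℂ diagSet) = 2 ∧
    ({X : Matrix (Fin 5) (Fin 5) ℂ | Xᵀ = X ∧ X.trace = 0 ∧
        (∀ θ₁ θ₂ : ℝ, rotT θ₁ θ₂ * X * (rotT θ₁ θ₂)ᵀ = X) ∧ M7 * X * M7ᵀ = X}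
      = Set.range (fun c : ℂ => c • Matrix.diagonal ![-1, -1, -1, -1, 4])) := by
  have part1 : {X : Matrix (Fin 5) (Fin 5) ℂ | Xᵀ = X ∧ X.trace = 0 ∧
      ∀ θ₁ θ₂ : ℝ, rotT θ₁ θ₂ * X * (rotT θ₁ θ₂)ᵀ = X} = diagSet := by
    ext X
    constructor
    · rintro ⟨hs, htr, h⟩
      have hd := fixed_diag X hs h
      refine ⟨X 0 0, X 2 2, X 4 4, ?_, hd⟩
      have htr' : X 0 0 + X 1 1 + X 2 2 + X 3 3 + X 4 4 = 0 := by
        simpa [Matrix.trace, Fin.sum_univ_five, Matrix.diag] using htr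
      have x11 : X 1 1 = X 0 0 := by
        have := congrFun (congrFun hd 1) 1
        simpa [Matrix.diagonal_apply, Matrix.vecHead, Matrix.vecTail] using this
      have x33 : X 3 3 = X 2 2 := by
        have := congrFun (congrFun hd 3) 3
        simpa [Matrix.diagonal_apply, Matrix.vecHead, Matrix.vecTail] using this
      linear_combination htr' - x11 - x33
    · rintro ⟨c₁, c₂, c₃, hc, rfl⟩
      refine ⟨Matrix.diagonal_transpose _, ?_, fun θ₁ θ₂ => diag_inv c₁ c₂ c₃ θ₁ θ₂⟩
      simp [Matrix.trace, Fin.sum_univ_five, Matrix.diag, Matrix.diagonal_apply,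
        Matrix.vecHead, Matrix.vecTail]
      linear_combination hc
  refine ⟨part1, ?_, ?_⟩
  · -- dimension
    set D1 : Matrix (Fin 5) (Fin 5) ℂ := Matrix.diagonal ![1, 1, 0, 0, -2] with hD1
    set D2 : Matrix (Fin 5) (Fin 5) ℂ := Matrix.diagonal ![0, 0, 1, 1, -2] with hD2
    have hspan : Submodule.span ℂ diagSet = Submodule.span ℂ (Set.range ![D1, D2]) := by
      apply le_antisymm
      · rw [Submodule.span_le]
        rintro Y ⟨c₁, c₂, c₃, hc, rfl⟩
        have : Matrix.diagonal ![c₁, c₁, c₂, c₂, c₃] = c₁ • D1 + c₂ • D2 := by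
          ext i j
          fin_cases i <;> fin_cases j <;>
            simp [hD1, hD2, Matrix.diagonal_apply, Matrix.vecHead, Matrix.vecTail] <;>
            linear_combination hc
        rw [this]
        exact Submodule.add_mem _
          (Submodule.smul_mem _ _ (Submodule.subset_span ⟨0, rfl⟩))
          (Submodule.smul_mem _ _ (Submodule.subset_span ⟨1, rfl⟩))
      · rw [Submodule.span_le]
        rintro Y ⟨i, rfl⟩
        fin_cases i
        · exact Submodule.subset_span ⟨1, 0, -2, by ring, rfl⟩
        · exact Submodule.subset_span ⟨0, 1, -2, by ring, rfl⟩
    rw [hspan]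
    have li : LinearIndependent ℂ ![D1, D2] := by
      rw [LinearIndependent.pair_iff]
      intro s t hst
      have e1 := congrFun (congrFun hst 0) 0
      have e2 := congrFun (congrFun hst 2) 2
      simp [hD1, hD2, Matrix.diagonal_apply, Matrix.vecHead, Matrix.vecTail] at e1 e2
      exact ⟨e1, e2⟩
    rw [finrank_span_eq_card li]
    simp
  · -- part 3
    ext X
    constructor
    · rintro ⟨hs, htr, h, hM⟩
      have hX : X ∈ diagSet := part1 ▸ (⟨hs, htr, h⟩ :
        X ∈ {X : Matrix (Fin 5) (Fin 5) ℂ | Xᵀ = X ∧ X.trace = 0 ∧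
          ∀ θ₁ θ₂ : ℝ, rotT θ₁ θ₂ * X * (rotT θ₁ θ₂)ᵀ = X})
      obtain ⟨c₁, c₂, c₃, hc, rfl⟩ := hX
      rw [M7_diag] at hM
      have e12 : c₂ = c₁ := by
        have := congrFun (congrFun hM 0) 0
        simpa [Matrix.diagonal_apply, Matrix.vecHead, Matrix.vecTail] using this
      refine ⟨-c₁, ?_⟩
      show (-c₁) • Matrix.diagonal ![(-1 : ℂ), -1, -1, -1, 4] = _
      rw [smul_diag_eq]
      ext i j
      fin_cases i <;> fin_cases j <;>
        simp [Matrix.diagonal_apply, Matrix.vecHead, Matrix.vecTail] <;>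
        first
          | rfl
          | linear_combination -e12
          | linear_combination -hc + 2 * e12
    · rintro ⟨c, rfl⟩
      simp only [Set.mem_setOf_eq]
      rw [smul_diag_eq]
      refine ⟨Matrix.diagonal_transpose _, ?_, fun θ₁ θ₂ => diag_inv _ _ _ θ₁ θ₂, ?_⟩
      · simp [Matrix.trace, Fin.sum_univ_five, Matrix.diag, Matrix.diagonal_apply,
          Matrix.vecHead, Matrix.vecTail]
        ring
      · rw [M7_diag]

end
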